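/- If f : [a,b] → ℝ⁺ is differentiable, a < b, and f* = e^{f'/f} satisfies 1 ≤ f* ≤ M and is multiplicatively convex on [a,b], then √(f(a) f(b)) · exp((1/(a-b)) ∫_a^b ln f(u) du) ≤ M^{(b-a)/4}. -/

import Mathlib

open Real intervalIntegral

/-- Trapezoid inequality with a uniform bound `M` on the multiplicative derivative. -/
theorem mul_trapezoid_inequality_bound (f : ℝ → ℝ) (a b M : ℝ) (hab : a < b)
    (hpos : ∀ x ∈ Set.Icc a b, 0 < f x)
    (hdiff : ∀ x ∈ Set.Icc a b, DifferentiableAt ℝ f x)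
    (hint : IntervalIntegrable (fun x => deriv f x / f x) MeasureTheory.volume a b)
    (hconv : ∀ x ∈ Set.Icc a b, ∀ y ∈ Set.Icc a b, ∀ t ∈ Set.Icc (0:ℝ) 1,
      Real.exp (deriv f (t * x + (1 - t) * y) / f (t * x + (1 - t) * y)) ≤
        Real.exp (deriv f x / f x) ^ t * Real.exp (deriv f y / f y) ^ (1 - t))
    (hone : ∀ x ∈ Set.Icc a b, 1 ≤ Real.exp (deriv f x / f x))
    (hM : ∀ x ∈ Set.Icc a b, Real.exp (deriv f x / f x) ≤ M) :
    Real.sqrt (f a * f b) * Real.exp ((1 / (a - b)) * ∫ u in a..b, Real.log (f u)) ≤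
      M ^ ((b - a) / 4) := by
  set g : ℝ → ℝ := fun x => Real.log (f x) with hgdef
  have haI : a ∈ Set.Icc a b := ⟨le_refl a, hab.le⟩
  have hbI : b ∈ Set.Icc a b := ⟨hab.le, le_refl b⟩
  have hM1 : (1:ℝ) ≤ M := le_trans (hone a haI) (hM a haI)
  have hMpos : (0:ℝ) < M := lt_of_lt_of_le one_pos hM1
  set L : ℝ := Real.log M with hLdef
  have hd_nonneg : ∀ x ∈ Set.Icc a b, 0 ≤ deriv f x / f x := by
    intro x hx
    have := hone x hx
    exact (Real.one_le_exp_iff).mp this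
  have hd_le : ∀ x ∈ Set.Icc a b, deriv f x / f x ≤ L := by
    intro x hx
    have h := Real.log_le_log (Real.exp_pos _) (hM x hx)
    simpa using h
  have hasg : ∀ x ∈ Set.Icc a b, HasDerivAt g (deriv f x / f x) x := by
    intro x hx
    have hfx := (hdiff x hx).hasDerivAt
    have h := (Real.hasDerivAt_log (ne_of_gt (hpos x hx))).comp x hfx
    simpa [g, Function.comp_def, div_eq_inv_mul] using h
  -- g a ≤ g x on [a, b]
  have key1 : ∀ x ∈ Set.Icc a b, g a ≤ g x := by
    intro x hx
    have hsub : Set.uIcc a x ⊆ Set.uIcc a b := by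
      rw [Set.uIcc_of_le hx.1, Set.uIcc_of_le hab.le]
      exact Set.Icc_subset_Icc le_rfl hx.2
    have hftc : ∫ u in a..x, deriv f u / f u = g x - g a :=
      intervalIntegral.integral_eq_sub_of_hasDerivAt
        (fun u hu => hasg u (by
          rw [Set.uIcc_of_le hx.1] at hu
          exact ⟨hu.1, le_trans hu.2 hx.2⟩))
        (hint.mono_set hsub)
    have hnn : 0 ≤ ∫ u in a..x, deriv f u / f u :=
      intervalIntegral.integral_nonneg hx.1
        (fun u hu => hd_nonneg u ⟨hu.1, le_trans hu.2 hx.2⟩)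
    linarith [hftc ▸ hnn]
  -- g b ≤ g x + (b - x) * L on [a, b]
  have key2 : ∀ x ∈ Set.Icc a b, g b ≤ g x + (b - x) * L := by
    intro x hx
    have hsub : Set.uIcc x b ⊆ Set.uIcc a b := by
      rw [Set.uIcc_of_le hx.2, Set.uIcc_of_le hab.le]
      exact Set.Icc_subset_Icc hx.1 le_rfl
    have hintx : IntervalIntegrable (fun u => deriv f u / f u) MeasureTheory.volume x b :=
      hint.mono_set hsub
    have hftc : ∫ u in x..b, deriv f u / f u = g b - g x :=
      intervalIntegral.integral_eq_sub_of_hasDerivAt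
        (fun u hu => hasg u (by
          rw [Set.uIcc_of_le hx.2] at hu
          exact ⟨le_trans hx.1 hu.1, hu.2⟩))
        hintx
    have hle : ∫ u in x..b, deriv f u / f u ≤ ∫ u in x..b, L := by
      apply intervalIntegral.integral_mono_on hx.2 hintx intervalIntegrable_const
      intro u hu
      exact hd_le u ⟨le_trans hx.1 hu.1, hu.2⟩
    rw [hftc, intervalIntegral.integral_const, smul_eq_mul] at hle
    linarith
  -- pointwise lower bound for g
  have keyp : ∀ x ∈ Set.Icc a b,
      (g a + g b - (b - x) * L) / 2 ≤ g x := by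
    intro x hx
    have h1 := key1 x hx
    have h2 := key2 x hx
    linarith
  -- integrability of g
  have hcont : ContinuousOn g (Set.Icc a b) := by
    intro x hx
    exact ((Real.continuousAt_log (ne_of_gt (hpos x hx))).comp
      (hdiff x hx).continuousAt).continuousWithinAt
  have hgint : IntervalIntegrable g MeasureTheory.volume a b := by
    apply ContinuousOn.intervalIntegrable
    rwa [Set.uIcc_of_le hab.le]
  have hpolyint : IntervalIntegrable (fun u => (g a + g b - (b - u) * L) / 2)
      MeasureTheory.volume a b :=
    (Continuous.intervalIntegrable (by continuity) a b)
  have hlow : (∫ u in a..b, (g a + g b - (b - u) * L) / 2) ≤ ∫ u in a..b, g u :=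
    intervalIntegral.integral_mono_on hab.le hpolyint hgint keyp
  have hval : (∫ u in a..b, (g a + g b - (b - u) * L) / 2)
      = (g a + g b) / 2 * (b - a) - L * (b - a) ^ 2 / 4 := by
    have hfun : (fun u => (g a + g b - (b - u) * L) / 2)
        = fun u => ((g a + g b - b * L) / 2) + (L / 2) * u := by
      funext u; ring
    rw [hfun, intervalIntegral.integral_add (intervalIntegrable_const)
      ((intervalIntegral.intervalIntegrable_id).const_mul _),
      intervalIntegral.integral_const, intervalIntegral.integral_const_mul,
      integral_id, smul_eq_mul]
    ring
  set I : ℝ := ∫ u in a..b, g u with hIdef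
  have hI : (g a + g b) / 2 * (b - a) - L * (b - a) ^ 2 / 4 ≤ I := by
    rw [← hval]; exact hlow
  have hba : (0:ℝ) < b - a := by linarith
  -- rewrite LHS and RHS as exponentials
  have hsqrt : Real.sqrt (f a * f b) = Real.exp ((g a + g b) / 2) := by
    rw [show (g a + g b) / 2 = Real.log (f a * f b) * (1 / 2) by
      rw [Real.log_mul (ne_of_gt (hpos a haI)) (ne_of_gt (hpos b hbI))]; ring,
      ← Real.rpow_def_of_pos (mul_pos (hpos a haI) (hpos b hbI)),
      ← Real.sqrt_eq_rpow]
  have hrhs : M ^ ((b - a) / 4) = Real.exp (L * ((b - a) / 4)) := by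
    rw [Real.rpow_def_of_pos hMpos]
  rw [hsqrt, hrhs, ← Real.exp_add, Real.exp_le_exp]
  have hne : a - b ≠ 0 := by intro h; linarith
  have h1 : (1 / (a - b)) * I = -(I / (b - a)) := by
    field_simp
    ring
  rw [h1]
  have h3 : (g a + g b) / 2 - L * ((b - a) / 4) ≤ I / (b - a) := by
    rw [le_div_iff₀ hba]
    nlinarith [hI]
  linarith
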